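/- arXiv:1411.4174 — 6 statements merged into one kernel-verified Lean document; each statement's English description precedes it below -/
import Mathlib

section
/- If T is a contraction on a Hilbert space H, H₁ ⊆ H is a closed subspace invariant under T, and T₁ = T restricted to H₁, then the defect space 𝒟_{T₁} = closure(D_{T₁} H₁) equals the closure of P_{H₁}(𝒟_T), where P_{H₁} is the orthogonal projection onto H₁. -/
open ContinuousLinearMap

open scoped InnerProductSpace

lemma sa_swap {E : Type*} [NormedAddCommGroup E] [InnerProductSpace ℂ E]
    [CompleteSpace E] (A : E →L[ℂ] E) (hA : IsSelfAdjoint A) (x y : E) :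
    ⟪A x, y⟫_ℂ = ⟪x, A y⟫_ℂ := by
  nth_rewrite 1 [← hA.adjoint_eq]
  exact adjoint_inner_left A y x

/-- For a self-adjoint `A` with `A ∘L A = 1 - adjoint B ∘L B`, we have
`‖A x‖ ^ 2 = ‖x‖ ^ 2 - ‖B x‖ ^ 2`. -/
lemma defect_norm_aux {E : Type*} [NormedAddCommGroup E] [InnerProductSpace ℂ E]
    [CompleteSpace E] (A B : E →L[ℂ] E) (hA : IsSelfAdjoint A)
    (hsq : A ∘L A = 1 - (adjoint B) ∘L B) (x : E) :
    ‖A x‖ ^ 2 = ‖x‖ ^ 2 - ‖B x‖ ^ 2 := by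
  have h1 : ⟪A x, A x⟫_ℂ = ⟪x, x⟫_ℂ - ⟪B x, B x⟫_ℂ := by
    rw [sa_swap A hA]
    have : A (A x) = (A ∘L A) x := rfl
    rw [this, hsq]
    simp only [sub_apply, ContinuousLinearMap.one_apply, inner_sub_right, comp_apply, adjoint_inner_right]
  have h2 := congrArg (RCLike.re (K := ℂ)) h1
  simpa only [map_sub, inner_self_eq_norm_sq] using h2

/-- If `T` is a contraction on a Hilbert space `H`, `H₁ ⊆ H` is a closed
subspace invariant under `T`, and `T₁ = T|_{H₁}`, then the defect space
`𝒟_{T₁} = closure (D_{T₁} H₁)` equals the closure of `P_{H₁}(𝒟_T)`, where `P_{H₁}` is the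
orthogonal projection onto `H₁`.  Here, for a contraction `A`, `D_A` denotes the positive
square root of `I - A^*A` and `𝒟_A` the closure of its range. -/
theorem stmt1 {H : Type*} [NormedAddCommGroup H] [InnerProductSpace ℂ H] [CompleteSpace H]
    (T : H →L[ℂ] H) (hT : ‖T‖ ≤ 1)
    (H₁ : Submodule ℂ H) (hH₁ : IsClosed (H₁ : Set H)) [CompleteSpace H₁]
    (hinv : ∀ x ∈ H₁, T x ∈ H₁)
    (T₁ : H₁ →L[ℂ] H₁) (hT₁ : ∀ x : H₁, (T₁ x : H) = T x)
    (DT : H →L[ℂ] H) (hDT_pos : DT.IsPositive)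
    (hDT_sq : DT ∘L DT = 1 - (adjoint T) ∘L T)
    (DT₁ : H₁ →L[ℂ] H₁) (hDT₁_pos : DT₁.IsPositive)
    (hDT₁_sq : DT₁ ∘L DT₁ = 1 - (adjoint T₁) ∘L T₁) :
    closure (Set.range DT₁) =
      closure ((H₁.orthogonalProjectionOnto) '' (closure (Set.range DT))) := by
  have hDT₁sa : IsSelfAdjoint DT₁ := hDT₁_pos.isSelfAdjoint
  have hDTsa : IsSelfAdjoint DT := hDT_pos.isSelfAdjoint
  -- key norm identity : ‖DT₁ x‖ = ‖DT ↑x‖ for x : H₁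
  have hnorm : ∀ x : H₁, ‖DT₁ x‖ = ‖DT (x : H)‖ := by
    intro x
    have h1 := defect_norm_aux DT₁ T₁ hDT₁sa hDT₁_sq x
    have h2 := defect_norm_aux DT T hDTsa hDT_sq (x : H)
    have hTx : ‖T₁ x‖ = ‖T (x : H)‖ := by rw [← hT₁ x]; rfl
    have hx : ‖(x : H)‖ = ‖x‖ := rfl
    have hsq : ‖DT₁ x‖ ^ 2 = ‖DT (x : H)‖ ^ 2 := by rw [h1, h2, hTx, hx]
    exact (pow_left_inj₀ (norm_nonneg _) (norm_nonneg _) two_ne_zero).mp hsq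
  have hzero : ∀ y : H₁, DT₁ y = 0 ↔ DT (y : H) = 0 := by
    intro y
    rw [← norm_eq_zero, ← norm_eq_zero (a := DT (y : H)), hnorm]
  -- the two submodules
  set S₁ : Submodule ℂ H₁ := LinearMap.range (DT₁ : H₁ →ₗ[ℂ] H₁) with hS₁
  set S₂ : Submodule ℂ H₁ :=
    Submodule.map ((H₁.orthogonalProjectionOnto : H →L[ℂ] H₁) : H →ₗ[ℂ] H₁)
      (LinearMap.range (DT : H →ₗ[ℂ] H)).topologicalClosure with hS₂
  have hmem₁ : ∀ y : H₁, y ∈ S₁ᗮ ↔ DT₁ y = 0 := by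
    intro y
    rw [Submodule.mem_orthogonal]
    constructor
    · intro h
      have h0 := h (DT₁ (DT₁ y)) (LinearMap.mem_range_self _ _)
      rw [sa_swap DT₁ hDT₁sa] at h0
      exact inner_self_eq_zero.mp h0
    · rintro h u ⟨x, rfl⟩
      show ⟪DT₁ x, y⟫_ℂ = 0
      rw [sa_swap DT₁ hDT₁sa, h, inner_zero_right]
  have hproj : ∀ (z : H) (y : H₁),
      ⟪(H₁.orthogonalProjectionOnto z : H₁), y⟫_ℂ = ⟪z, (y : H)⟫_ℂ := by
    intro z y
    have h := H₁.starProjection_inner_eq_zero z (y : H) y.2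
    rw [inner_sub_left, sub_eq_zero] at h
    rw [Submodule.coe_inner]
    exact h.symm
  have hmem₂ : ∀ y : H₁, y ∈ S₂ᗮ ↔ DT (y : H) = 0 := by
    intro y
    rw [Submodule.mem_orthogonal]
    constructor
    · intro h
      have hmem : DT (DT (y : H)) ∈ (LinearMap.range (DT : H →ₗ[ℂ] H)).topologicalClosure :=
        Submodule.le_topologicalClosure _ (LinearMap.mem_range_self _ _)
      have h0 := h _ (Submodule.mem_map_of_mem hmem)
      simp only [ContinuousLinearMap.coe_coe] at h0
      rw [hproj, sa_swap DT hDTsa] at h0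
      exact inner_self_eq_zero.mp h0
    · rintro h u ⟨z, hz, rfl⟩
      simp only [ContinuousLinearMap.coe_coe]
      show ⟪(H₁.orthogonalProjectionOnto z : H₁), y⟫_ℂ = 0
      rw [hproj]
      have hset : (LinearMap.range (DT : H →ₗ[ℂ] H) : Set H) ⊆ {z | ⟪z, (y : H)⟫_ℂ = 0} := by
        rintro _ ⟨x, rfl⟩
        show ⟪DT x, (y : H)⟫_ℂ = 0
        rw [sa_swap DT hDTsa, h, inner_zero_right]
      have hclosed : IsClosed {z : H | ⟪z, (y : H)⟫_ℂ = 0} := by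
        have hc : Continuous fun z : H => ⟪z, (y : H)⟫_ℂ :=
          continuous_id.inner continuous_const
        exact isClosed_eq hc continuous_const
      have hz' : z ∈ closure (LinearMap.range (DT : H →ₗ[ℂ] H) : Set H) := hz
      exact hclosed.closure_subset_iff.mpr hset hz'
  have hperp : S₁ᗮ = S₂ᗮ := by
    ext y
    rw [hmem₁, hmem₂, hzero]
  have hcl : S₁.topologicalClosure = S₂.topologicalClosure := by
    rw [← Submodule.orthogonal_orthogonal_eq_closure,
      ← Submodule.orthogonal_orthogonal_eq_closure, hperp]
  have hsets := congrArg (fun K : Submodule ℂ H₁ => (K : Set H₁)) hcl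
  simp only [Submodule.topologicalClosure_coe] at hsets
  have hL : (S₁ : Set H₁) = Set.range DT₁ := by
    rw [hS₁]; exact LinearMap.coe_range _
  have hR : (S₂ : Set H₁) = (H₁.orthogonalProjectionOnto) '' (closure (Set.range DT)) := by
    rw [hS₂, Submodule.map_coe, Submodule.topologicalClosure_coe, LinearMap.coe_range,
      ContinuousLinearMap.coe_coe, ContinuousLinearMap.coe_coe]
  rw [hL, hR] at hsets
  exact hsets
end

section
/- Let T₁ : E₁ → H and T₂ : E₂ → H be contractions between Hilbert spaces, and let M(T_i) denote the range of T_i with the inner product making T_i a coisometry onto it (i.e., ⟨T_i ξ, T_i η⟩ := ⟨ξ, η⟩ for ξ, η ∈ (ker T_i)^⊥). Then M(T₁) ⊆ M(T₂) with a contractive inclusion if and only if T₁T₁^* ≤ T₂T₂^*. -/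
open ContinuousLinearMap

/-- The norm of an element `h` of the operator-range space `M(T)` (the range of `T` endowed
with the inner product `⟨Tξ, Tη⟩ = ⟨ξ, η⟩` for `ξ, η ∈ (ker T)^⊥`): it is the infimum of the
norms of the preimages of `h` under `T`, which is attained at the unique preimage lying in
`(ker T)^⊥`. -/
noncomputable def rangeNorm {E H : Type*} [NormedAddCommGroup E] [NormedAddCommGroup H]
    [InnerProductSpace ℂ E] [InnerProductSpace ℂ H] (T : E →L[ℂ] H) (h : H) : ℝ :=
  sInf {r : ℝ | ∃ ξ : E, T ξ = h ∧ ‖ξ‖ = r}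


lemma douglas_aux {E₁ E₂ H : Type*} [NormedAddCommGroup E₁] [InnerProductSpace ℂ E₁]
    [CompleteSpace E₁] [NormedAddCommGroup E₂] [InnerProductSpace ℂ E₂] [CompleteSpace E₂]
    [NormedAddCommGroup H] [InnerProductSpace ℂ H] [CompleteSpace H]
    (T₁ : E₁ →L[ℂ] H) (T₂ : E₂ →L[ℂ] H)
    (hle : ∀ x : H, ‖adjoint T₁ x‖ ≤ ‖adjoint T₂ x‖) (ξ : E₁) :
    ∃ η : E₂, T₂ η = T₁ ξ ∧ ‖η‖ ≤ ‖ξ‖ := by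
  set S₁ := adjoint T₁ with hS₁
  set S₂ := adjoint T₂ with hS₂
  have hwd : ∀ x x' : H, S₂ x = S₂ x' → S₁ x = S₁ x' := by
    intro x x' hxx
    have h1 := hle (x - x')
    rw [map_sub, map_sub, hxx, sub_self, norm_zero] at h1
    have h0 : ‖S₁ x - S₁ x'‖ = 0 := le_antisymm h1 (norm_nonneg _)
    exact sub_eq_zero.mp (norm_eq_zero.mp h0)
  set p : Submodule ℂ E₂ := LinearMap.range (S₂ : H →ₗ[ℂ] E₂) with hp
  have hmem : ∀ y : p, ∃ x : H, S₂ x = (y : E₂) := fun y => y.2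
  -- value of f is independent of choice
  have hval : ∀ (y : p) (x : H), S₂ x = (y : E₂) →
      (inner ℂ ξ (S₁ (hmem y).choose) : ℂ) = inner ℂ ξ (S₁ x) := by
    intro y x hx
    rw [hwd (hmem y).choose x ((hmem y).choose_spec.trans hx.symm)]
  set f : p →ₗ[ℂ] ℂ :=
    { toFun := fun y => inner ℂ ξ (S₁ (hmem y).choose)
      map_add' := by
        intro y z
        obtain ⟨xy, hxy⟩ := hmem y
        obtain ⟨xz, hxz⟩ := hmem z
        have : S₂ (xy + xz) = ((y + z : p) : E₂) := by
          rw [map_add, hxy, hxz]; rfl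
        simp only [hval (y+z) (xy+xz) this, hval y xy hxy, hval z xz hxz,
          map_add, inner_add_right]
      map_smul' := by
        intro c y
        obtain ⟨xy, hxy⟩ := hmem y
        have : S₂ (c • xy) = ((c • y : p) : E₂) := by
          rw [map_smul, hxy]; rfl
        simp only [hval (c • y) (c • xy) this, hval y xy hxy,
          map_smul, inner_smul_right, RingHom.id_apply, smul_eq_mul] } with hf
  have hfval : ∀ (y : p) (x : H), S₂ x = (y : E₂) → f y = inner ℂ ξ (S₁ x) := by
    intro y x hx; exact hval y x hx
  have hbound : ∀ y : p, ‖f y‖ ≤ ‖ξ‖ * ‖y‖ := by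
    intro y
    obtain ⟨x, hx⟩ := hmem y
    rw [hfval y x hx]
    calc ‖(inner ℂ ξ (S₁ x) : ℂ)‖ ≤ ‖ξ‖ * ‖S₁ x‖ := norm_inner_le_norm _ _
      _ ≤ ‖ξ‖ * ‖S₂ x‖ := by
          exact mul_le_mul_of_nonneg_left (hle x) (norm_nonneg ξ)
      _ = ‖ξ‖ * ‖y‖ := by rw [hx]; rfl
  set fc : p →L[ℂ] ℂ := f.mkContinuous ‖ξ‖ hbound with hfc
  obtain ⟨g, hgext, hgnorm⟩ := exists_extension_norm_eq p fc
  have hgle : ‖g‖ ≤ ‖ξ‖ := hgnorm.le.trans (f.mkContinuous_norm_le (norm_nonneg ξ) hbound)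
  set η : E₂ := (InnerProductSpace.toDual ℂ E₂).symm g with hη
  have hηinner : ∀ z : E₂, (inner ℂ η z : ℂ) = g z := fun z =>
    InnerProductSpace.toDual_symm_apply
  have hηnorm : ‖η‖ ≤ ‖ξ‖ := by
    rw [hη, LinearIsometryEquiv.norm_map]; exact hgle
  refine ⟨η, ?_, hηnorm⟩
  apply ext_inner_left ℂ
  intro x
  have h1 : (inner ℂ η (S₂ x) : ℂ) = inner ℂ ξ (S₁ x) := by
    have hmem' : S₂ x ∈ p := ⟨x, rfl⟩
    rw [hηinner (S₂ x)]
    have := hgext ⟨S₂ x, hmem'⟩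
    rw [this]
    exact hfval ⟨S₂ x, hmem'⟩ x rfl
  have h2 : (inner ℂ (S₂ x) η : ℂ) = inner ℂ (S₁ x) ξ := by
    rw [← inner_conj_symm, h1, inner_conj_symm]
  rw [hS₁, hS₂, adjoint_inner_left, adjoint_inner_left] at h2
  exact h2

section Helpers
variable {E₁ E₂ H : Type*} [NormedAddCommGroup E₁] [InnerProductSpace ℂ E₁]
    [CompleteSpace E₁] [NormedAddCommGroup E₂] [InnerProductSpace ℂ E₂] [CompleteSpace E₂]
    [NormedAddCommGroup H] [InnerProductSpace ℂ H] [CompleteSpace H]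

lemma rangeNorm_bddBelow (T : E₂ →L[ℂ] H) (h : H) :
    BddBelow {r : ℝ | ∃ ξ : E₂, T ξ = h ∧ ‖ξ‖ = r} :=
  ⟨0, fun r ⟨ξ, _, hr⟩ => hr ▸ norm_nonneg ξ⟩

lemma rangeNorm_le (T : E₂ →L[ℂ] H) (ξ : E₂) : rangeNorm T (T ξ) ≤ ‖ξ‖ :=
  csInf_le (rangeNorm_bddBelow T (T ξ)) ⟨ξ, rfl, rfl⟩

lemma reApply_eq (T : E₂ →L[ℂ] H) (x : H) :
    ((T ∘L adjoint T).reApplyInnerSelf x) = ‖adjoint T x‖ ^ 2 := by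
  rw [ContinuousLinearMap.reApplyInnerSelf_apply, ContinuousLinearMap.comp_apply,
    ← ContinuousLinearMap.adjoint_inner_right, inner_self_eq_norm_sq]


end Helpers

/-- Let `T₁ : E₁ → H`, `T₂ : E₂ → H` be contractions between Hilbert spaces
and `M(Tᵢ)` the range of `Tᵢ` with the range inner product. Then `M(T₁) ⊆ M(T₂)` with a
contractive inclusion if and only if `T₁T₁^* ≤ T₂T₂^*`. -/
theorem stmt7 {E₁ E₂ H : Type*} [NormedAddCommGroup E₁] [InnerProductSpace ℂ E₁]
    [CompleteSpace E₁] [NormedAddCommGroup E₂] [InnerProductSpace ℂ E₂] [CompleteSpace E₂]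
    [NormedAddCommGroup H] [InnerProductSpace ℂ H] [CompleteSpace H]
    (T₁ : E₁ →L[ℂ] H) (T₂ : E₂ →L[ℂ] H) (hT₁ : ‖T₁‖ ≤ 1) (hT₂ : ‖T₂‖ ≤ 1) :
    (Set.range T₁ ⊆ Set.range T₂ ∧ ∀ h ∈ Set.range T₁, rangeNorm T₂ h ≤ rangeNorm T₁ h) ↔
      (T₂ ∘L adjoint T₂ - T₁ ∘L adjoint T₁).IsPositive := by
  have hsa : IsSelfAdjoint (T₂ ∘L adjoint T₂ - T₁ ∘L adjoint T₁) := by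
    apply IsSelfAdjoint.sub <;>
    · rw [ContinuousLinearMap.isSelfAdjoint_iff']
      rw [ContinuousLinearMap.adjoint_comp, ContinuousLinearMap.adjoint_adjoint]
  constructor
  · rintro ⟨hsub, hnorm⟩
    -- key: ‖T₁* x‖ ≤ ‖T₂* x‖
    have hle : ∀ x : H, ‖adjoint T₁ x‖ ≤ ‖adjoint T₂ x‖ := by
      intro x
      set a := adjoint T₁ x with ha
      set h := T₁ a with hh
      have hmem : h ∈ Set.range T₁ := ⟨a, rfl⟩
      have hinner : (inner ℂ x h : ℂ) = (‖a‖ : ℂ) ^ 2 := by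
        rw [hh, ← ContinuousLinearMap.adjoint_inner_left, ← ha, inner_self_eq_norm_sq_to_K]
        norm_cast
      have key : ‖a‖ ^ 2 ≤ ‖adjoint T₂ x‖ * rangeNorm T₂ h := by
        have habs : ‖(inner ℂ x h : ℂ)‖ = ‖a‖ ^ 2 := by
          rw [hinner]; simp [norm_pow]
        rw [← habs]
        -- lower bound each preimage norm
        obtain ⟨η₀, hη₀⟩ := hsub hmem
        by_cases hz : adjoint T₂ x = 0
        · have : (inner ℂ x h : ℂ) = 0 := by
            rw [← hη₀, ← ContinuousLinearMap.adjoint_inner_left, hz, inner_zero_left]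
          rw [this, norm_zero]
          have h0 : (0:ℝ) ≤ rangeNorm T₂ h := by
            refine le_csInf ⟨‖η₀‖, η₀, hη₀, rfl⟩ ?_
            rintro r ⟨ξ, _, hr⟩; exact hr ▸ norm_nonneg ξ
          positivity
        · have hpos : 0 < ‖adjoint T₂ x‖ := norm_pos_iff.mpr hz
          rw [mul_comm, ← div_le_iff₀ hpos]
          refine le_csInf ⟨‖η₀‖, η₀, hη₀, rfl⟩ ?_
          rintro r ⟨η, hη, hr⟩
          rw [div_le_iff₀ hpos]
          calc ‖(inner ℂ x h : ℂ)‖ = ‖(inner ℂ (adjoint T₂ x) η : ℂ)‖ := by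
                rw [← hη, ContinuousLinearMap.adjoint_inner_left]
            _ ≤ ‖adjoint T₂ x‖ * ‖η‖ := norm_inner_le_norm _ _
            _ = r * ‖adjoint T₂ x‖ := by rw [hr, mul_comm]
      have key2 : rangeNorm T₂ h ≤ ‖a‖ := (hnorm h hmem).trans (rangeNorm_le T₁ a)
      have key3 : ‖a‖ ^ 2 ≤ ‖adjoint T₂ x‖ * ‖a‖ :=
        key.trans (mul_le_mul_of_nonneg_left key2 (norm_nonneg _))
      nlinarith [key3, norm_nonneg a, norm_nonneg (adjoint T₂ x)]
    refine ⟨ContinuousLinearMap.isSelfAdjoint_iff_isSymmetric.mp hsa, fun x => ?_⟩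
    rw [ContinuousLinearMap.reApplyInnerSelf_apply, ContinuousLinearMap.sub_apply,
      inner_sub_left, map_sub]
    rw [← ContinuousLinearMap.reApplyInnerSelf_apply, ← ContinuousLinearMap.reApplyInnerSelf_apply,
      reApply_eq, reApply_eq]
    have := hle x
    have h2 := pow_le_pow_left₀ (norm_nonneg _) this 2
    linarith
  · rintro ⟨_, hp⟩
    have hle : ∀ x : H, ‖adjoint T₁ x‖ ≤ ‖adjoint T₂ x‖ := by
      intro x
      have := hp x
      rw [ContinuousLinearMap.reApplyInnerSelf_apply, ContinuousLinearMap.sub_apply,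
        inner_sub_left, map_sub, ← ContinuousLinearMap.reApplyInnerSelf_apply,
        ← ContinuousLinearMap.reApplyInnerSelf_apply, reApply_eq, reApply_eq] at this
      have hsq : ‖adjoint T₁ x‖ ^ 2 ≤ ‖adjoint T₂ x‖ ^ 2 := by linarith
      exact (pow_le_pow_iff_left₀ (norm_nonneg _) (norm_nonneg _) two_ne_zero).mp hsq
    constructor
    · rintro h ⟨ξ, rfl⟩
      obtain ⟨η, hη, _⟩ := douglas_aux T₁ T₂ hle ξ
      exact ⟨η, hη⟩
    · rintro h ⟨ξ₀, rfl⟩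
      refine le_csInf ⟨‖ξ₀‖, ξ₀, rfl, rfl⟩ ?_
      rintro r ⟨ξ, hξ, rfl⟩
      obtain ⟨η, hη, hηle⟩ := douglas_aux T₁ T₂ hle ξ
      calc rangeNorm T₂ (T₁ ξ₀) = rangeNorm T₂ (T₂ η) := by rw [hη, hξ]
        _ ≤ ‖η‖ := rangeNorm_le T₂ η
        _ ≤ ‖ξ‖ := hηle
end

section
/- Let T : E → H be an injective bounded operator between Hilbert spaces and let M(T) = T(E) with the inner product ⟨Tξ, Tη⟩_{M(T)} = ⟨ξ, η⟩_E. If H is a reproducing kernel Hilbert space with reproducing vectors 𝔩_λ^H, then M(T) is a reproducing kernel Hilbert space whose reproducing vector at λ is TT^* 𝔩_λ^H. -/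
open ContinuousLinearMap

/-- Let `T : E → H` be an injective bounded operator between Hilbert spaces
and `M(T) = T(E)` with the inner product `⟨Tξ, Tη⟩_{M(T)} = ⟨ξ, η⟩_E` (encoded by the
function `ipM`, which the hypothesis `hipM` characterizes).  If `H` is a reproducing kernel
Hilbert space of functions on `X` (with realization `ev` and reproducing vectors `k`),
then `M(T)` is a reproducing kernel Hilbert space whose reproducing vector at `λ` is
`T T^* (k λ)`: this vector lies in `M(T)` and reproduces the value at `λ` of every element
of `M(T)` with respect to the `M(T)` inner product. -/
theorem stmt8 {X : Type*} {E H : Type*} [NormedAddCommGroup E] [InnerProductSpace ℂ E]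
    [CompleteSpace E] [NormedAddCommGroup H] [InnerProductSpace ℂ H] [CompleteSpace H]
    (ev : H → X → ℂ) (k : X → H) (hk : ∀ (lam : X) (f : H), ev f lam = inner ℂ (k lam) f)
    (T : E →L[ℂ] H) (hinj : Function.Injective T)
    (ipM : H → H → ℂ) (hipM : ∀ ξ η : E, ipM (T ξ) (T η) = (inner ℂ η ξ : ℂ)) :
    ∀ lam : X, (T ∘L adjoint T) (k lam) ∈ Set.range T ∧
      ∀ ξ : E, ev (T ξ) lam = ipM (T ξ) ((T ∘L adjoint T) (k lam)) := by
  intro lam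
  refine ⟨⟨adjoint T (k lam), rfl⟩, fun ξ => ?_⟩
  have : (T ∘L adjoint T) (k lam) = T (adjoint T (k lam)) := rfl
  rw [this, hipM, adjoint_inner_left, hk]
end

section
/- Let T : E → H be an injective contraction with H a reproducing kernel Hilbert space with kernel 𝔏^H. Then the kernel (z, λ) ↦ 𝔏^H(z,λ) - 𝔏^{M(T)}(z,λ) is the reproducing kernel of the range space M(D_{T^*}), where D_{T^*} = (I - TT^*)^{1/2} is viewed as an operator from 𝒟_{T^*} = closure(ran D_{T^*}) into H. -/
open ContinuousLinearMap

/-- Let `T : E → H` be an injective contraction, where `H` is a reproducing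
kernel Hilbert space of functions on `X` with kernel `𝔏^H(z,λ) = ev (k λ) z`.  Let
`D_{T^*}` be the positive square root of `I - TT^*`.  Then the kernel
`(z,λ) ↦ 𝔏^H(z,λ) - 𝔏^{M(T)}(z,λ)` is the reproducing kernel of the operator-range space
`M(D_{T^*})`: the reproducing kernel of `M(T)` at `λ` is `TT^*(k λ)`, the difference kernel
at `(z,λ)` equals the value at `z` of `D_{T^*}D_{T^*}(k λ)`, and the latter vector lies in
`M(D_{T^*})` and reproduces the values of elements of `M(D_{T^*})` with respect to its range
inner product `ipD` (characterized on `(ker D_{T^*})^⊥` by `hipD`; Mathlib's `inner` is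
conjugate-linear in the first variable, so the range inner product
`⟨D x, D y⟩_{M(D)} = ⟨x, y⟩` is written `ipD (D x) (D y) = inner y x`). -/
theorem stmt9 {X : Type*} {E H : Type*} [NormedAddCommGroup E] [InnerProductSpace ℂ E]
    [CompleteSpace E] [NormedAddCommGroup H] [InnerProductSpace ℂ H] [CompleteSpace H]
    (ev : H → X → ℂ) (k : X → H) (hk : ∀ (lam : X) (f : H), ev f lam = inner ℂ (k lam) f)
    (T : E →L[ℂ] H) (hinj : Function.Injective T) (hT : ‖T‖ ≤ 1)
    (DTstar : H →L[ℂ] H) (hD_pos : DTstar.IsPositive)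
    (hD_sq : DTstar ∘L DTstar = 1 - T ∘L adjoint T)
    (ipD : H → H → ℂ)
    (hipD : ∀ x y : H, x ∈ (LinearMap.ker (DTstar : H →ₗ[ℂ] H))ᗮ → y ∈ (LinearMap.ker (DTstar : H →ₗ[ℂ] H))ᗮ →
      ipD (DTstar x) (DTstar y) = (inner ℂ y x : ℂ)) :
    (∀ z lam : X,
        ev (k lam) z - ev ((T ∘L adjoint T) (k lam)) z = ev ((DTstar ∘L DTstar) (k lam)) z) ∧
    ∀ lam : X, (DTstar ∘L DTstar) (k lam) ∈ Set.range DTstar ∧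
      ∀ x : H, ev (DTstar x) lam = ipD (DTstar x) ((DTstar ∘L DTstar) (k lam)) := by
  have hsa : ContinuousLinearMap.adjoint DTstar = DTstar := hD_pos.isSelfAdjoint
  set K := LinearMap.ker (DTstar : H →ₗ[ℂ] H) with hK
  have hKc : IsClosed (K : Set H) := by
    have : (K : Set H) = ⇑DTstar ⁻¹' {0} := by ext v; simp [hK, LinearMap.mem_ker]
    rw [this]; exact isClosed_singleton.preimage DTstar.continuous
  haveI : CompleteSpace K := hKc.completeSpace_coe
  -- decomposition
  have hmem : ∀ v : H, ((Submodule.orthogonalProjectionOnto Kᗮ v : H)) ∈ Kᗮ := fun v =>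
    (Submodule.orthogonalProjectionOnto Kᗮ v).2
  have hDeq : ∀ v : H, DTstar v = DTstar ((Submodule.orthogonalProjectionOnto Kᗮ v : H)) := by
    intro v
    have h1 : v - (Submodule.orthogonalProjectionOnto Kᗮ v : H) ∈ Kᗮᗮ :=
      Submodule.sub_starProjection_mem_orthogonal v
    rw [K.orthogonal_orthogonal] at h1
    have h2 : DTstar (v - (Submodule.orthogonalProjectionOnto Kᗮ v : H)) = 0 := h1
    have := map_sub DTstar v ((Submodule.orthogonalProjectionOnto Kᗮ v : H))
    rw [h2] at this
    exact sub_eq_zero.mp this.symm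
  constructor
  · intro z lam
    rw [hk, hk, hk, hD_sq]
    simp [inner_sub_right]
  · intro lam
    refine ⟨⟨DTstar (k lam), by simp⟩, ?_⟩
    intro x
    have hx₁ := hmem x
    have hy₁ := hmem (DTstar (k lam))
    have key : ipD (DTstar x) ((DTstar ∘L DTstar) (k lam))
        = inner ℂ ((Submodule.orthogonalProjectionOnto Kᗮ (DTstar (k lam)) : H))
            ((Submodule.orthogonalProjectionOnto Kᗮ x : H)) := by
      rw [show (DTstar ∘L DTstar) (k lam) = DTstar (DTstar (k lam)) from rfl,
        hDeq x, hDeq (DTstar (k lam))]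
      exact hipD _ _ hx₁ hy₁
    rw [key]
    have horth : (inner ℂ ((DTstar (k lam)) - (Submodule.orthogonalProjectionOnto Kᗮ (DTstar (k lam)) : H))
        ((Submodule.orthogonalProjectionOnto Kᗮ x : H)) : ℂ) = 0 := by
      have h1 : (DTstar (k lam)) - (Submodule.orthogonalProjectionOnto Kᗮ (DTstar (k lam)) : H) ∈ K := by
        have := Submodule.sub_starProjection_mem_orthogonal (K := Kᗮ) (DTstar (k lam))
        rwa [K.orthogonal_orthogonal] at this
      exact (Submodule.mem_orthogonal K _).mp hx₁ _ h1
    have : (inner ℂ ((Submodule.orthogonalProjectionOnto Kᗮ (DTstar (k lam)) : H))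
        ((Submodule.orthogonalProjectionOnto Kᗮ x : H)) : ℂ)
        = inner ℂ (DTstar (k lam)) ((Submodule.orthogonalProjectionOnto Kᗮ x : H)) := by
      have := inner_sub_left (𝕜 := ℂ) (DTstar (k lam))
        ((Submodule.orthogonalProjectionOnto Kᗮ (DTstar (k lam)) : H)) ((Submodule.orthogonalProjectionOnto Kᗮ x : H))
      rw [horth] at this
      exact (sub_eq_zero.mp this.symm).symm
    rw [this]
    have : (inner ℂ (DTstar (k lam)) ((Submodule.orthogonalProjectionOnto Kᗮ x : H)) : ℂ)
        = inner ℂ (k lam) (DTstar ((Submodule.orthogonalProjectionOnto Kᗮ x : H))) := by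
      conv_lhs => rw [← hsa]
      exact ContinuousLinearMap.adjoint_inner_left DTstar _ _
    rw [this, ← hDeq x, hk]
end

section
/- Let T : E → H be a contraction. A vector ξ ∈ H belongs to the range of D_{T^*} if and only if T^*ξ belongs to the range of D_T. Moreover, for ξ₁, ξ₂ in the range of D_{T^*}, the range-space inner products satisfy ⟨ξ₁, ξ₂⟩_{C(T)} = ⟨ξ₁, ξ₂⟩_H + ⟨T^*ξ₁, T^*ξ₂⟩_{C(T^*)}. -/
open ContinuousLinearMap Polynomial

set_option maxHeartbeats 4000000
set_option synthInstance.maxHeartbeats 4000000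

section aux

variable {E H : Type*} [NormedAddCommGroup E] [InnerProductSpace ℂ E] [CompleteSpace E]
  [NormedAddCommGroup H] [InnerProductSpace ℂ H] [CompleteSpace H]

lemma aux_poly (b : E →L[ℂ] H) (a : E →L[ℂ] E) (a' : H →L[ℂ] H)
    (hcomm : b ∘L a = a' ∘L b) (q : ℝ[X]) :
    b ∘L (aeval a q) = (aeval a' q) ∘L b := by
  have hba : ∀ y, b (a y) = a' (b y) := fun y => DFunLike.congr_fun hcomm y
  have hpow : ∀ (n : ℕ) (x), b ((a ^ n) x) = (a' ^ n) (b x) := by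
    intro n
    induction n with
    | zero => intro x; simp
    | succ n ih =>
      intro x
      rw [pow_succ, pow_succ, mul_apply_eq_comp, mul_apply_eq_comp, ih, hba]
  ext x
  simp only [comp_apply]
  induction q using Polynomial.induction_on' with
  | add p q hp hq => simp only [map_add, add_apply, hp, hq, map_add]
  | monomial n r =>
      simp only [aeval_monomial, mul_apply_eq_comp, Algebra.algebraMap_eq_smul_one,
        smul_apply, one_apply_eq_self]
      rw [b.map_smul_of_tower, hpow]

end aux

section aux2

variable {E H : Type*} [NormedAddCommGroup E] [InnerProductSpace ℂ E] [CompleteSpace E]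
  [NormedAddCommGroup H] [InnerProductSpace ℂ H] [CompleteSpace H]

lemma aux_spec {G : Type*} [NormedAddCommGroup G] [InnerProductSpace ℂ G] [CompleteSpace G]
    (c : G →L[ℂ] G) {M : ℝ} (hc : ‖c‖ ≤ M) : spectrum ℝ c ⊆ Set.Icc (-M) M := by
  intro x hx
  have h1 := spectrum.subset_closedBall_norm_mul (𝕜 := ℝ) c hx
  have h2 : ‖c‖ * ‖(1 : G →L[ℂ] G)‖ ≤ M :=
    le_trans (mul_le_of_le_one_right (norm_nonneg c) norm_id_le) hc
  have : x ∈ Metric.closedBall (0:ℝ) M :=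
    Metric.closedBall_subset_closedBall h2 h1
  simpa [Real.closedBall_eq_Icc] using this

lemma aux_cfc (b : E →L[ℂ] H) (a : E →L[ℂ] E) (a' : H →L[ℂ] H)
    (ha : IsSelfAdjoint a) (ha' : IsSelfAdjoint a')
    (hcomm : b ∘L a = a' ∘L b) (f : ℝ → ℝ) (hf : Continuous f) :
    b ∘L cfc f a = cfc f a' ∘L b := by
  set M : ℝ := max ‖a‖ ‖a'‖ with hM
  have hM0 : (0:ℝ) ≤ M := le_trans (norm_nonneg a) (le_max_left _ _)
  set s : Set ℝ := Set.Icc (-M) M with hs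
  have hspec : spectrum ℝ a ⊆ s := aux_spec a (le_max_left _ _)
  have hspec' : spectrum ℝ a' ⊆ s := aux_spec a' (le_max_right _ _)
  rw [← sub_eq_zero, ← norm_eq_zero]
  by_contra hne
  have hpos : 0 < ‖b ∘L cfc f a - cfc f a' ∘L b‖ :=
    lt_of_le_of_ne (norm_nonneg _) (Ne.symm hne)
  set ε : ℝ := ‖b ∘L cfc f a - cfc f a' ∘L b‖ with hε
  set δ : ℝ := ε / (2 * ‖b‖ + 2) with hδ
  have hden : (0:ℝ) < 2 * ‖b‖ + 2 := by positivity
  have hδpos : 0 < δ := div_pos hpos hden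
  -- Stone-Weierstrass: find a polynomial q with sup_{s} |f - q.eval| ≤ δ
  haveI : CompactSpace s := isCompact_iff_compactSpace.mp isCompact_Icc
  set F : C(s, ℝ) := ContinuousMap.restrict s ⟨f, hf⟩ with hF
  have hFmem : F ∈ closure (polynomialFunctions s : Set C(s, ℝ)) := by
    have h1 : (polynomialFunctions s).topologicalClosure = ⊤ :=
      polynomialFunctions.topologicalClosure s
    exact (h1 ▸ Algebra.mem_top : F ∈ (polynomialFunctions s).topologicalClosure)
  obtain ⟨g, hg, hdist⟩ := Metric.mem_closure_iff.mp hFmem δ hδpos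
  obtain ⟨q, -, rfl⟩ := Subalgebra.mem_map.mp hg
  have hqs : ∀ x ∈ s, ‖f x - q.eval x‖ ≤ δ := by
    intro x hx
    have := (ContinuousMap.dist_le hδpos.le).mp hdist.le ⟨x, hx⟩
    simpa [hF, Real.dist_eq, Real.norm_eq_abs] using this
  have hb1 : ‖cfc f a - cfc q.eval a‖ ≤ δ := by
    rw [← cfc_sub f q.eval a hf.continuousOn q.continuous.continuousOn]
    exact norm_cfc_le hδpos.le (fun x hx => hqs x (hspec hx))
  have hb2 : ‖cfc f a' - cfc q.eval a'‖ ≤ δ := by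
    rw [← cfc_sub f q.eval a' hf.continuousOn q.continuous.continuousOn]
    exact norm_cfc_le hδpos.le (fun x hx => hqs x (hspec' hx))
  have hmid : b ∘L cfc q.eval a = cfc q.eval a' ∘L b := by
    rw [cfc_polynomial q a ha, cfc_polynomial q a' ha']
    exact aux_poly b a a' hcomm q
  have hdecomp : b ∘L cfc f a - cfc f a' ∘L b
      = b ∘L (cfc f a - cfc q.eval a) - (cfc f a' - cfc q.eval a') ∘L b := by
    rw [comp_sub, ContinuousLinearMap.sub_comp, hmid]; abel
  have hbound : ε ≤ ‖b‖ * δ + δ * ‖b‖ := by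
    rw [hε, hdecomp]
    refine le_trans (norm_sub_le _ _) (add_le_add ?_ ?_)
    · exact le_trans (opNorm_comp_le _ _) (mul_le_mul_of_nonneg_left hb1 (norm_nonneg b))
    · exact le_trans (opNorm_comp_le _ _)
        (mul_le_mul_of_nonneg_right hb2 (norm_nonneg b))
  have : ε ≤ (2 * ‖b‖) * (ε / (2 * ‖b‖ + 2)) := by linarith [hbound]
  have h2 : (2 * ‖b‖) * (ε / (2 * ‖b‖ + 2)) < ε := by
    rw [mul_div_assoc']
    rw [div_lt_iff₀ hden]
    nlinarith [norm_nonneg b, hpos]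
  linarith

end aux2

section aux3

variable {E H : Type*} [NormedAddCommGroup E] [InnerProductSpace ℂ E] [CompleteSpace E]
  [NormedAddCommGroup H] [InnerProductSpace ℂ H] [CompleteSpace H]

lemma aux_sqrt (b : E →L[ℂ] H) (a : E →L[ℂ] E) (a' : H →L[ℂ] H)
    (ha : a.IsPositive) (ha' : a'.IsPositive)
    (hcomm : b ∘L (a ∘L a) = (a' ∘L a') ∘L b) : b ∘L a = a' ∘L b := by
  set g : ℝ → ℝ := fun x : ℝ => (NNReal.sqrt x.toNNReal : ℝ) with hg_def
  have hg : Continuous g :=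
    NNReal.continuous_coe.comp (NNReal.continuous_sqrt.comp continuous_real_toNNReal)
  have ha0 : 0 ≤ a := (nonneg_iff_isPositive a).2 ha
  have ha0' : 0 ≤ a' := (nonneg_iff_isPositive a').2 ha'
  have haa : 0 ≤ a * a := by
    have h := star_mul_self_nonneg a
    rwa [ha.isSelfAdjoint.star_eq] at h
  have haa' : 0 ≤ a' * a' := by
    have h := star_mul_self_nonneg a'
    rwa [ha'.isSelfAdjoint.star_eq] at h
  have hsa : IsSelfAdjoint (a * a) := .of_nonneg haa
  have hsa' : IsSelfAdjoint (a' * a') := .of_nonneg haa'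
  have e1 : cfc g (a * a) = a := by
    rw [← cfc_nnreal_eq_real NNReal.sqrt (a * a) haa, ← CFC.sqrt_eq_cfc]
    exact CFC.sqrt_unique rfl ha0
  have e1' : cfc g (a' * a') = a' := by
    rw [← cfc_nnreal_eq_real NNReal.sqrt (a' * a') haa', ← CFC.sqrt_eq_cfc]
    exact CFC.sqrt_unique rfl ha0'
  have key := aux_cfc b (a * a) (a' * a') hsa hsa'
    (by rw [mul_def, mul_def]; exact hcomm) g hg
  rwa [e1, e1'] at key

end aux3


/-- Let `T : E → H` be a contraction, `D_T = (I - T^*T)^{1/2}`,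
`D_{T^*} = (I - TT^*)^{1/2}`.  A vector `ξ ∈ H` belongs to the range of `D_{T^*}` if and only
if `T^*ξ` belongs to the range of `D_T`.  Moreover, for `ξ₁, ξ₂` in the range of `D_{T^*}`,
the range-space inner products satisfy
`⟨ξ₁, ξ₂⟩_{C(T)} = ⟨ξ₁, ξ₂⟩_H + ⟨T^*ξ₁, T^*ξ₂⟩_{C(T^*)}`.
Here `C(T)` is the range of `D_{T^*}` with the inner product
`⟨D_{T^*}η₁, D_{T^*}η₂⟩_{C(T)} = ⟨η₁, η₂⟩` for `η₁, η₂ ∈ (ker D_{T^*})^⊥` (encoded by `ipCT`),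
and similarly `C(T^*)` is the range of `D_T` (inner product `ipCTstar`).  Mathlib's `inner` is
conjugate-linear in the first variable, so the paper's `⟨x, y⟩` is written `inner y x`. -/
theorem stmt10 {E H : Type*} [NormedAddCommGroup E] [InnerProductSpace ℂ E] [CompleteSpace E]
    [NormedAddCommGroup H] [InnerProductSpace ℂ H] [CompleteSpace H]
    (T : E →L[ℂ] H) (hT : ‖T‖ ≤ 1)
    (DT : E →L[ℂ] E) (hDT_pos : DT.IsPositive) (hDT_sq : DT ∘L DT = 1 - adjoint T ∘L T)
    (DTstar : H →L[ℂ] H) (hDTstar_pos : DTstar.IsPositive)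
    (hDTstar_sq : DTstar ∘L DTstar = 1 - T ∘L adjoint T)
    (ipCT : H → H → ℂ)
    (hipCT : ∀ x y : H, x ∈ (LinearMap.ker (DTstar : H →ₗ[ℂ] H))ᗮ → y ∈ (LinearMap.ker (DTstar : H →ₗ[ℂ] H))ᗮ →
      ipCT (DTstar x) (DTstar y) = (inner ℂ y x : ℂ))
    (ipCTstar : E → E → ℂ)
    (hipCTstar : ∀ x y : E, x ∈ (LinearMap.ker (DT : E →ₗ[ℂ] E))ᗮ → y ∈ (LinearMap.ker (DT : E →ₗ[ℂ] E))ᗮ →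
      ipCTstar (DT x) (DT y) = (inner ℂ y x : ℂ)) :
    (∀ ξ : H, ξ ∈ Set.range DTstar ↔ adjoint T ξ ∈ Set.range DT) ∧
    ∀ ξ₁ ∈ Set.range DTstar, ∀ ξ₂ ∈ Set.range DTstar,
      ipCT ξ₁ ξ₂ = (inner ℂ ξ₂ ξ₁ : ℂ) + ipCTstar (adjoint T ξ₁) (adjoint T ξ₂) := by
  -- the intertwining relations
  have hTD : T ∘L DT = DTstar ∘L T := by
    refine aux_sqrt T DT DTstar hDT_pos hDTstar_pos ?_
    rw [hDT_sq, hDTstar_sq]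
    ext x
    simp [sub_apply, comp_apply, one_apply]
  have hTDx : ∀ x, T (DT x) = DTstar (T x) := fun x => DFunLike.congr_fun hTD x
  have hAD : DT ∘L adjoint T = adjoint T ∘L DTstar := by
    have h := congrArg ContinuousLinearMap.adjoint hTD
    rwa [adjoint_comp, adjoint_comp, isSelfAdjoint_iff'.mp hDT_pos.isSelfAdjoint,
      isSelfAdjoint_iff'.mp hDTstar_pos.isSelfAdjoint] at h
  have hADx : ∀ ξ, DT (adjoint T ξ) = adjoint T (DTstar ξ) :=
    fun ξ => DFunLike.congr_fun hAD ξ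
  have hDT2 : ∀ x : E, DT (DT x) = x - adjoint T (T x) := by
    intro x
    have := DFunLike.congr_fun hDT_sq x
    simpa [sub_apply, comp_apply, one_apply] using this
  have hDTstar2 : ∀ ξ : H, DTstar (DTstar ξ) = ξ - T (adjoint T ξ) := by
    intro ξ
    have := DFunLike.congr_fun hDTstar_sq ξ
    simpa [sub_apply, comp_apply, one_apply] using this
  constructor
  · intro ξ
    constructor
    · rintro ⟨η, rfl⟩
      exact ⟨adjoint T η, hADx η⟩
    · rintro ⟨e, he⟩
      refine ⟨DTstar ξ + T e, ?_⟩
      rw [map_add, hDTstar2, ← hTDx, he]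
      abel
  · intro ξ₁ h₁ ξ₂ h₂
    -- find representatives orthogonal to the kernel
    haveI : CompleteSpace (LinearMap.ker (DTstar : H →ₗ[ℂ] H) : Submodule ℂ H) :=
      (ContinuousLinearMap.isClosed_ker DTstar).completeSpace_coe
    have hrep : ∀ ξ ∈ Set.range DTstar,
        ∃ η, η ∈ (LinearMap.ker (DTstar : H →ₗ[ℂ] H))ᗮ ∧ DTstar η = ξ := by
      rintro ξ ⟨η, rfl⟩
      obtain ⟨y, hy, z, hz, rfl⟩ :=
        (LinearMap.ker (DTstar : H →ₗ[ℂ] H) : Submodule ℂ H).exists_add_mem_mem_orthogonal η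
      refine ⟨z, hz, ?_⟩
      rw [map_add, (show DTstar y = 0 from LinearMap.mem_ker.mp hy), zero_add]
    obtain ⟨η₁, hη₁, rfl⟩ := hrep ξ₁ h₁
    obtain ⟨η₂, hη₂, rfl⟩ := hrep ξ₂ h₂
    have horth : ∀ η : H, η ∈ (LinearMap.ker (DTstar : H →ₗ[ℂ] H))ᗮ →
        adjoint T η ∈ (LinearMap.ker (DT : E →ₗ[ℂ] E))ᗮ := by
      intro η hη
      rw [Submodule.mem_orthogonal]
      intro e he
      have hTe : T e ∈ LinearMap.ker (DTstar : H →ₗ[ℂ] H) := by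
        rw [LinearMap.mem_ker]
        have h0 : DT e = 0 := LinearMap.mem_ker.mp he
        show DTstar (T e) = 0
        rw [← hTDx, h0, map_zero]
      calc (inner ℂ e (adjoint T η) : ℂ) = inner ℂ (T e) η := adjoint_inner_right T e η
        _ = 0 := (Submodule.mem_orthogonal _ η).mp hη (T e) hTe
    have key₁ : ipCT (DTstar η₁) (DTstar η₂) = (inner ℂ η₂ η₁ : ℂ) := hipCT η₁ η₂ hη₁ hη₂
    have key₂ : ipCTstar (adjoint T (DTstar η₁)) (adjoint T (DTstar η₂))
        = (inner ℂ (adjoint T η₂) (adjoint T η₁) : ℂ) := by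
      rw [← hADx, ← hADx]
      exact hipCTstar _ _ (horth η₁ hη₁) (horth η₂ hη₂)
    rw [key₁, key₂]
    have e2 : (inner ℂ (adjoint T η₂) (adjoint T η₁) : ℂ) = inner ℂ η₂ (T (adjoint T η₁)) :=
      adjoint_inner_left T (adjoint T η₁) η₂
    have e3 : (inner ℂ (DTstar η₂) (DTstar η₁) : ℂ) = inner ℂ η₂ (DTstar (DTstar η₁)) :=
      hDTstar_pos.isSymmetric η₂ (DTstar η₁)
    rw [e2, e3, ← inner_add_right, hDTstar2]
    congr 1
    abel
end

section
/- For a contraction T : E → H between Hilbert spaces, the Julia operator J(T) : E ⊕ 𝒟_{T^*} → H ⊕ 𝒟_T given by the block matrix [[T, D_{T^*}], [D_T, -T^*]] is unitary. -/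
open ContinuousLinearMap


/-- If `b` commutes with a selfadjoint `a`, it commutes with `cfc f a`. -/
lemma commute_cfc_of_commute {A : Type*} [CStarAlgebra A]
    {a b : A} (hab : Commute b a) (f : ℝ → ℝ) :
    Commute b (cfc f a) := by
  refine cfc_cases (fun x => Commute b x) a f (Commute.zero_right b) fun hf ha' => ?_
  suffices h : ∀ g : C(spectrum ℝ a, ℝ), Commute b (cfcHom ha' g) from h _
  intro g
  let S : Subalgebra ℝ C(spectrum ℝ a, ℝ) :=
    (Subalgebra.centralizer ℝ {b}).comap
      ((cfcHom ha' : C(spectrum ℝ a, ℝ) →⋆ₐ[ℝ] A) : C(spectrum ℝ a, ℝ) →ₐ[ℝ] A)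
  have hmem : ∀ h : C(spectrum ℝ a, ℝ), h ∈ S ↔ b * cfcHom ha' h = cfcHom ha' h * b := by
    intro h
    simp [S, Subalgebra.mem_comap, Subalgebra.mem_centralizer_iff]
  have hclosed : IsClosed (S : Set C(spectrum ℝ a, ℝ)) := by
    have hc : IsClosed {x : A | b * x = x * b} :=
      isClosed_eq (continuous_const.mul continuous_id) (continuous_id.mul continuous_const)
    have : (S : Set C(spectrum ℝ a, ℝ)) =
        (cfcHom ha' : C(spectrum ℝ a, ℝ) →⋆ₐ[ℝ] A) ⁻¹' {x : A | b * x = x * b} := by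
      ext h; simpa using hmem h
    rw [this]
    exact hc.preimage (cfcHom_continuous ha')
  have hid : (ContinuousMap.id ℝ).restrict (spectrum ℝ a) ∈ S := by
    rw [hmem, cfcHom_id ha']
    exact hab
  have hsep : S.SeparatesPoints := by
    intro x y hxy
    refine ⟨_, ⟨(ContinuousMap.id ℝ).restrict (spectrum ℝ a), hid, rfl⟩, ?_⟩
    simpa [ContinuousMap.restrict] using fun h => hxy (Subtype.ext h)
  have htop := ContinuousMap.subalgebra_topologicalClosure_eq_top_of_separatesPoints S hsep
  have hg : g ∈ S := by
    have : g ∈ S.topologicalClosure := htop ▸ Algebra.mem_top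
    rw [← SetLike.mem_coe, Subalgebra.topologicalClosure_coe, hclosed.closure_eq] at this; exact this
  exact (hmem g).mp hg

lemma commute_of_commute_mul_self {A : Type*} [CStarAlgebra A] [PartialOrder A]
    [StarOrderedRing A] {a b : A} (ha : 0 ≤ a) (hab : Commute b (a * a)) :
    Commute b a := by
  have hsa : IsSelfAdjoint a := IsSelfAdjoint.of_nonneg ha
  have ha2 : 0 ≤ a * a := by simpa [hsa.star_eq] using star_mul_self_nonneg a
  have hs : cfc Real.sqrt (a * a) = a := by
    have h1 : cfc Real.sqrt (a * a) * cfc Real.sqrt (a * a) = a * a := by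
      rw [← cfc_mul ..]
      calc cfc (fun x => Real.sqrt x * Real.sqrt x) (a*a)
          = cfc (id : ℝ → ℝ) (a*a) :=
            cfc_congr fun x hx => Real.mul_self_sqrt (spectrum_nonneg_of_nonneg ha2 hx)
        _ = a * a := cfc_id ℝ (a*a)
    have h2 : 0 ≤ cfc Real.sqrt (a * a) := cfc_nonneg fun x _ => Real.sqrt_nonneg x
    calc cfc Real.sqrt (a*a) = CFC.sqrt (a*a) := (CFC.sqrt_unique h1 h2).symm
      _ = a := CFC.sqrt_unique rfl ha
  exact hs ▸ commute_cfc_of_commute hab Real.sqrt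
lemma julia_intertwine {E H : Type*} [NormedAddCommGroup E] [InnerProductSpace ℂ E]
    [CompleteSpace E] [NormedAddCommGroup H] [InnerProductSpace ℂ H] [CompleteSpace H]
    (T : E →L[ℂ] H)
    (DT : E →L[ℂ] E) (hDT_pos : DT.IsPositive) (hDT_sq : DT ∘L DT = 1 - adjoint T ∘L T)
    (DTstar : H →L[ℂ] H) (hDTstar_pos : DTstar.IsPositive)
    (hDTstar_sq : DTstar ∘L DTstar = 1 - T ∘L adjoint T) :
    T ∘L DT = DTstar ∘L T := by
  classical
  let e : WithLp 2 (E × H) ≃L[ℂ] E × H := WithLp.prodContinuousLinearEquiv 2 ℂ E H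
  let M : WithLp 2 (E × H) →L[ℂ] WithLp 2 (E × H) :=
    e.symm.toContinuousLinearMap ∘L (DT.prodMap DTstar) ∘L e.toContinuousLinearMap
  let N : WithLp 2 (E × H) →L[ℂ] WithLp 2 (E × H) :=
    e.symm.toContinuousLinearMap ∘L
      ((0 : E × H →L[ℂ] E).prod (T ∘L ContinuousLinearMap.fst ℂ E H)) ∘L
      e.toContinuousLinearMap
  have hMapp : ∀ z, M z = e.symm (DT (e z).1, DTstar (e z).2) := fun z => rfl
  have hNapp : ∀ z, N z = e.symm (0, T (e z).1) := fun z => rfl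
  have hee : ∀ p : E × H, e (e.symm p) = p := fun p => e.apply_symm_apply p
  -- key square identity
  have hkey : ∀ x : E, T (DT (DT x)) = DTstar (DTstar (T x)) := by
    intro x
    have h1 : DT (DT x) = x - adjoint T (T x) := by
      have := DFunLike.congr_fun hDT_sq x
      simpa using this
    have h2 : DTstar (DTstar (T x)) = T x - T (adjoint T (T x)) := by
      have := DFunLike.congr_fun hDTstar_sq (T x)
      simpa using this
    rw [h1, h2, map_sub]
  -- M is nonneg
  have hM : (0 : WithLp 2 (E × H) →L[ℂ] WithLp 2 (E × H)) ≤ M := by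
    rw [nonneg_iff_isPositive]
    constructor
    · intro z w
      have h1 := (isSelfAdjoint_iff_isSymmetric.mp hDT_pos.isSelfAdjoint) (e z).1 (e w).1
      have h2 := (isSelfAdjoint_iff_isSymmetric.mp hDTstar_pos.isSelfAdjoint) (e z).2 (e w).2
      show (inner ℂ (DT (e z).1) ((e w).1) + inner ℂ (DTstar (e z).2) ((e w).2) : ℂ) =
        inner ℂ ((e z).1) (DT ((e w).1)) + inner ℂ ((e z).2) (DTstar ((e w).2))
      exact congrArg₂ (· + ·) h1 h2
    · intro z
      have h1 := hDT_pos.re_inner_nonneg_left (e z).1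
      have h2 := hDTstar_pos.re_inner_nonneg_left (e z).2
      show 0 ≤ RCLike.re ((inner ℂ (DT (e z).1) ((e z).1) + inner ℂ (DTstar (e z).2) ((e z).2) : ℂ))
      rw [map_add]
      exact add_nonneg h1 h2
  -- N commutes with M * M
  have hNMM : Commute N (M * M) := by
    show N * (M * M) = (M * M) * N
    ext z
    show N (M (M z)) = M (M (N z))
    simp only [hMapp, hNapp, hee]
    exact congrArg e.symm (Prod.ext (by simp) (by simpa using hkey (e z).1))
  have hNM : Commute N M := commute_of_commute_mul_self hM hNMM
  -- extract the intertwining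
  ext x
  have h0 := DFunLike.congr_fun hNM.eq (e.symm (x, 0))
  simp only [ContinuousLinearMap.mul_apply, hMapp, hNapp, hee] at h0
  have h3 := congrArg (fun z => (e z).2) h0
  simp only [hee, map_zero] at h3
  simpa using h3


/-- For a contraction `T : E → H` between Hilbert spaces, the Julia operator
`J(T) : E ⊕ 𝒟_{T^*} → H ⊕ 𝒟_T`, given by the block matrix `[[T, D_{T^*}], [D_T, -T^*]]`
(i.e. `x ⊕ y ↦ (Tx + D_{T^*}y) ⊕ (D_T x - T^* y)`), is unitary.  Here `D_T, D_{T^*}` are the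
positive square roots of `I - T^*T` and `I - TT^*`, and `𝒟_T ⊆ E`, `𝒟_{T^*} ⊆ H` are the
closures of their ranges.  Unitarity is expressed by: `J(T)` maps `E ⊕ 𝒟_{T^*}` into
`H ⊕ 𝒟_T`, it is isometric there, and it is onto `H ⊕ 𝒟_T`. -/
theorem stmt11 {E H : Type*} [NormedAddCommGroup E] [InnerProductSpace ℂ E] [CompleteSpace E]
    [NormedAddCommGroup H] [InnerProductSpace ℂ H] [CompleteSpace H]
    (T : E →L[ℂ] H) (hT : ‖T‖ ≤ 1)
    (DT : E →L[ℂ] E) (hDT_pos : DT.IsPositive) (hDT_sq : DT ∘L DT = 1 - adjoint T ∘L T)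
    (DTstar : H →L[ℂ] H) (hDTstar_pos : DTstar.IsPositive)
    (hDTstar_sq : DTstar ∘L DTstar = 1 - T ∘L adjoint T) :
    (∀ (x : E), ∀ y ∈ closure (Set.range DTstar),
        DT x - adjoint T y ∈ closure (Set.range DT)) ∧
    (∀ (x : E), ∀ y ∈ closure (Set.range DTstar),
        ‖T x + DTstar y‖ ^ 2 + ‖DT x - adjoint T y‖ ^ 2 = ‖x‖ ^ 2 + ‖y‖ ^ 2) ∧
    (∀ (u : H), ∀ v ∈ closure (Set.range DT), ∃ (x : E) (y : H),
        y ∈ closure (Set.range DTstar) ∧ T x + DTstar y = u ∧ DT x - adjoint T y = v) := by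
  have hcomm : T ∘L DT = DTstar ∘L T :=
    julia_intertwine T DT hDT_pos hDT_sq DTstar hDTstar_pos hDTstar_sq
  have hTD : ∀ x, T (DT x) = DTstar (T x) := fun x => DFunLike.congr_fun hcomm x
  have hDTsa : adjoint DT = DT := by
    rw [← star_eq_adjoint]; exact hDT_pos.isSelfAdjoint
  have hDTstarsa : adjoint DTstar = DTstar := by
    rw [← star_eq_adjoint]; exact hDTstar_pos.isSelfAdjoint
  have hadj : DT ∘L adjoint T = adjoint T ∘L DTstar := by
    have := congrArg ContinuousLinearMap.adjoint hcomm
    rwa [adjoint_comp, adjoint_comp, hDTsa, hDTstarsa] at this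
  have hDTadj : ∀ y, DT (adjoint T y) = adjoint T (DTstar y) :=
    fun y => DFunLike.congr_fun hadj y
  -- closures as submodules
  have hmemDT : ∀ z : E, z ∈ closure (Set.range ⇑DT) ↔
      z ∈ (LinearMap.range (DT : E →ₗ[ℂ] E)).topologicalClosure := by
    intro z
    rw [← SetLike.mem_coe, Submodule.topologicalClosure_coe, LinearMap.coe_range, ContinuousLinearMap.coe_coe]
  have hmemDTstar : ∀ z : H, z ∈ closure (Set.range ⇑DTstar) ↔
      z ∈ (LinearMap.range (DTstar : H →ₗ[ℂ] H)).topologicalClosure := by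
    intro z
    rw [← SetLike.mem_coe, Submodule.topologicalClosure_coe, LinearMap.coe_range, ContinuousLinearMap.coe_coe]
  refine ⟨?_, ?_, ?_⟩
  · intro x y hy
    have h1 : DT x ∈ closure (Set.range ⇑DT) := subset_closure ⟨x, rfl⟩
    have h2 : adjoint T y ∈ closure (Set.range ⇑DT) := by
      refine map_mem_closure (adjoint T).continuous hy ?_
      rintro _ ⟨w, rfl⟩
      exact ⟨adjoint T w, (hDTadj w).symm ▸ rfl⟩
    rw [hmemDT] at h1 h2 ⊢
    exact sub_mem h1 h2
  · intro x y _
    have hDTx : DT (DT x) = x - adjoint T (T x) := by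
      simpa using DFunLike.congr_fun hDT_sq x
    have hDTy : DTstar (DTstar y) = y - T (adjoint T y) := by
      simpa using DFunLike.congr_fun hDTstar_sq y
    have e1 : (inner ℂ (T x) (T x) + inner ℂ (DT x) (DT x) : ℂ) = inner ℂ x x := by
      have a1 := adjoint_inner_left T x (T x)
      have a2 := adjoint_inner_left DT x (DT x)
      rw [hDTsa] at a2
      rw [← a1, ← a2, hDTx, inner_sub_left]
      ring
    have e2 : (inner ℂ (DTstar y) (DTstar y) + inner ℂ (adjoint T y) (adjoint T y) : ℂ)
        = inner ℂ y y := by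
      have a3 := adjoint_inner_left DTstar y (DTstar y)
      rw [hDTstarsa] at a3
      have a4 := adjoint_inner_right T (adjoint T y) y
      rw [← a3, a4, hDTy, inner_sub_left]
      ring
    have e3 : (inner ℂ (T x) (DTstar y) : ℂ) = inner ℂ (DT x) (adjoint T y) := by
      have a5 := adjoint_inner_left DTstar y (T x)
      rw [hDTstarsa] at a5
      have a6 := adjoint_inner_right T (DT x) y
      rw [← a5, a6, hTD x]
    have hx2 : ‖T x‖ ^ 2 + ‖DT x‖ ^ 2 = ‖x‖ ^ 2 := by
      have h := congrArg (RCLike.re (K := ℂ)) e1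
      rwa [map_add, inner_self_eq_norm_sq, inner_self_eq_norm_sq, inner_self_eq_norm_sq] at h
    have hy2 : ‖DTstar y‖ ^ 2 + ‖adjoint T y‖ ^ 2 = ‖y‖ ^ 2 := by
      have h := congrArg (RCLike.re (K := ℂ)) e2
      rwa [map_add, inner_self_eq_norm_sq, inner_self_eq_norm_sq, inner_self_eq_norm_sq] at h
    have hcross : RCLike.re (inner ℂ (T x) (DTstar y) : ℂ)
        = RCLike.re (inner ℂ (DT x) (adjoint T y) : ℂ) := by rw [e3]
    rw [norm_add_sq (𝕜 := ℂ) (T x) (DTstar y), norm_sub_sq (𝕜 := ℂ) (DT x) (adjoint T y)]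
    linarith [hx2, hy2, hcross]
  · intro u v hv
    refine ⟨adjoint T u + DT v, DTstar u - T v, ?_, ?_, ?_⟩
    · have h1 : DTstar u ∈ closure (Set.range ⇑DTstar) := subset_closure ⟨u, rfl⟩
      have h2 : T v ∈ closure (Set.range ⇑DTstar) := by
        refine map_mem_closure T.continuous hv ?_
        rintro _ ⟨w, rfl⟩
        exact ⟨T w, (hTD w).symm⟩
      rw [hmemDTstar] at h1 h2 ⊢
      exact sub_mem h1 h2
    · have h5 : DTstar (DTstar u) = u - T (adjoint T u) := by
        simpa using DFunLike.congr_fun hDTstar_sq u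
      rw [map_add, map_sub, h5, hTD v]
      abel
    · have h6 : DT (DT v) = v - adjoint T (T v) := by
        simpa using DFunLike.congr_fun hDT_sq v
      rw [map_add, map_sub, h6, hDTadj u]
      abel
end
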